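/- If G ⊆ E is (M,N)-negligible and G' ⊆ E∖G is (M−G, N/G)-negligible, then G ∪ G' is (M,N)-negligible. -/

import Mathlib

open Set Matroid
open scoped symmDiff

namespace AZ

variable {α : Type*}

/-- The contraction `M / X`, defined (in the standard way) as the dual of the
restriction of the dual to the complement of `X`. -/
def con (M : Matroid α) (X : Set α) : Matroid α := (M✶ ↾ (M.E \ X))✶

/-- The deletion `M − X := M ↾ (E ∖ X)`. -/
def del (M : Matroid α) (X : Set α) : Matroid α := M ↾ (M.E \ X)

/-- The matroidal Hall condition `Hall(M,N)`: for every `X ⊆ E` such that `M ↾ X` has a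
base that is independent in `N.X = N/(E∖X)`, also `N.X` has a base independent in `M ↾ X`. -/
def Hall (M N : Matroid α) : Prop :=
  ∀ X ⊆ N.E,
    (∃ B, (M ↾ X).IsBase B ∧ (con N (N.E \ X)).Indep B) →
    ∃ B, (con N (N.E \ X)).IsBase B ∧ (M ↾ X).Indep B

/-- `(M,N)` is finitely matchable: every finite `F ⊆ E` is `N`-spanned by an
`M`-independent set. -/
def FinitelyMatchable (M N : Matroid α) : Prop :=
  ∀ F ⊆ M.E, F.Finite → ∃ I, M.Indep I ∧ F ⊆ N.closure I

/-- `G ⊆ E` is `(M,N)`-negligible: for all finite `X ⊆ G` and finite `Y ⊆ E ∖ G` there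
is an `M/Y`-independent set that `N`-spans `X`. -/
def Negligible (M N : Matroid α) (G : Set α) : Prop :=
  G ⊆ M.E ∧
    ∀ X ⊆ G, X.Finite → ∀ Y ⊆ M.E \ G, Y.Finite →
      ∃ I, (con M Y).Indep I ∧ X ⊆ N.closure I

/-- A common independent set `I` of `M` and `N` is `(M,N)`-stable if every `J ⊆ E ∖ I`
that is independent in `M/I` and in `N` is also independent in `N/I`. -/
def Stable (M N : Matroid α) (I : Set α) : Prop :=
  M.Indep I ∧ N.Indep I ∧
    ∀ J ⊆ M.E \ I, (con M I).Indep J → N.Indep J → (con N I).Indep J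

/-- A circuit of a matroid: a minimal dependent subset of the ground set. -/
def Circuit (M : Matroid α) (C : Set α) : Prop :=
  C ⊆ M.E ∧ ¬ M.Indep C ∧ ∀ D ⊂ C, M.Indep D

/-- The arc relation of the exchange digraph `D(I)`: for `x ∈ E ∖ I` and `y ∈ I` there is
an arc `x → y` if `x ∈ span_M(I)` and `y` lies in the unique `M`-circuit contained in
`I + x`, and an arc `y → x` if `x ∈ span_N(I)` and `y` lies in the unique `N`-circuit
contained in `I + x`. -/
def Arc (M N : Matroid α) (I : Set α) (x y : α) : Prop :=
  (x ∈ M.E \ I ∧ y ∈ I ∧ x ∈ M.closure I ∧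
    ∃ C, Circuit M C ∧ C ⊆ insert x I ∧ x ∈ C ∧ y ∈ C) ∨
  (x ∈ I ∧ y ∈ M.E \ I ∧ y ∈ N.closure I ∧
    ∃ C, Circuit N C ∧ C ⊆ insert y I ∧ y ∈ C ∧ x ∈ C)

/-- `Reach M N I x` is `E(x,I)`: the set of elements reachable from `x` by a directed
path in `D(I)`. -/
def Reach (M N : Matroid α) (I : Set α) (x : α) : Set α :=
  {y | Relation.ReflTransGen (Arc M N I) x y}

/-- `P = {f 0, …, f (2n)}` is an `xy`-augmenting path for `I`: it starts at
`x = f 0 ∉ span_N(I)`, ends at `y = f (2n) ∉ span_M(I)`, consecutive elements are joined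
by arcs of `D(I)`, and there are no jumping arcs. -/
def IsAugPath (M N : Matroid α) (I P : Set α) (x y : α) : Prop :=
  ∃ (n : ℕ) (f : ℕ → α),
    P = f '' Set.Iic (2 * n) ∧ P ⊆ M.E ∧ Set.InjOn f (Set.Iic (2 * n)) ∧
    f 0 = x ∧ f (2 * n) = y ∧
    x ∉ N.closure I ∧ y ∉ M.closure I ∧
    (∀ i < 2 * n, Arc M N I (f i) (f (i + 1))) ∧
    (∀ i j, i + 1 < j → j ≤ 2 * n → ¬ Arc M N I (f i) (f j))

/-- One augmentation step: `J = I △ P` for some augmenting path `P` for `I`. -/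
def AugStep (M N : Matroid α) (I J : Set α) : Prop :=
  ∃ P x y, IsAugPath M N I P x y ∧ J = I ∆ P

/-- `J ∈ A(I)`: `J` is obtained from `I` by finitely many successive augmentations. -/
def MemA (M N : Matroid α) (I J : Set α) : Prop :=
  Relation.ReflTransGen (AugStep M N) I J

/-- `O = {f 0, …, f (2n+1)}` is a switching cycle for `I`: the arcs of `D(I)` inside `O`
are exactly the arcs `f i → f (i+1 mod 2n+2)`, forming a chordless directed cycle. -/
def SwitchCycle (M N : Matroid α) (I O : Set α) : Prop :=
  ∃ (n : ℕ) (f : ℕ → α),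
    O = f '' Set.Iio (2 * n + 2) ∧ O ⊆ M.E ∧ Set.InjOn f (Set.Iio (2 * n + 2)) ∧
    ∀ i < 2 * n + 2, ∀ j < 2 * n + 2,
      (Arc M N I (f i) (f j) ↔ j = (i + 1) % (2 * n + 2))

/-- The preorder on finite common independent sets: `I ⊴ J` iff
`I ⊆ span_M(J) ∩ span_N(J)`. -/
def Le (M N : Matroid α) (I J : Set α) : Prop :=
  I ⊆ M.closure J ∩ N.closure J

/-- The equivalence relation: `I ∼ J` iff `I ⊴ J` and `J ⊴ I`. -/
def Sim (M N : Matroid α) (I J : Set α) : Prop :=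
  Le M N I J ∧ Le M N J I

/-- A family of finite common independent sets of `M` and `N` that is closed under `∼`
and is `⊴`-directed. -/
def DirFam (M N : Matroid α) (D : Set (Set α)) : Prop :=
  (∀ I ∈ D, I.Finite ∧ M.Indep I ∧ N.Indep I) ∧
  (∀ I ∈ D, ∀ J, J.Finite → M.Indep J → N.Indep J → Sim M N I J → J ∈ D) ∧
  (∀ I ∈ D, ∀ J ∈ D, ∃ K ∈ D, Le M N I K ∧ Le M N J K)

/-- A maximal directed family of finite common independent sets. -/
def MaxDirFam (M N : Matroid α) (D : Set (Set α)) : Prop :=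
  DirFam M N D ∧ ∀ D', DirFam M N D' → D ⊆ D' → D' = D

lemma con_ground (M : Matroid α) (C : Set α) : (con M C).E = M.E \ C := rfl

lemma con_indep_iff (M : Matroid α) {C : Set α} (hC : C ⊆ M.E) {I : Set α} :
    (con M C).Indep I ↔ I ⊆ M.E \ C ∧ ∃ J, M.IsBasis J C ∧ M.Indep (I ∪ J) := by
  have hCE : M.E \ C ⊆ M✶.E := by rw [dual_ground]; exact diff_subset
  rw [con, dual_indep_iff_exists']
  simp only [restrict_ground_eq]
  refine and_congr_right fun hIE => ?_
  constructor
  · rintro ⟨B, hB, hdisj⟩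
    rw [isBase_restrict_iff hCE] at hB
    obtain ⟨B', hB', hBeq⟩ := hB.exists_isBase
    have hB'M : M.IsBase (M.E \ B') := hB'.compl_isBase_of_dual
    have hbasis : M.IsBasis ((M.E \ B') ∩ C) C := by
      rw [hB'M.inter_isBasis_iff_compl_inter_isBasis_dual hC,
        diff_diff_cancel_left (show B' ⊆ M.E from hB'.subset_ground), ← hBeq]
      exact hB
    refine ⟨(M.E \ B') ∩ C, hbasis, hB'M.indep.subset (union_subset ?_ inter_subset_left)⟩
    intro x hx
    refine ⟨(hIE hx).1, fun hxB' => ?_⟩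
    exact hdisj.ne_of_mem hx (hBeq ▸ ⟨hxB', hIE hx⟩) rfl
  · rintro ⟨J, hJ, hIJ⟩
    obtain ⟨B₀, hB₀, hsub⟩ := hIJ.exists_isBase_superset
    have hJB : J = B₀ ∩ C :=
      hJ.eq_of_subset_indep (hB₀.indep.inter_right C)
        (subset_inter ((subset_union_right).trans hsub) hJ.subset) inter_subset_right
    have hbasis : M✶.IsBasis ((M.E \ B₀) ∩ (M.E \ C)) (M.E \ C) :=
      hB₀.compl_inter_isBasis_of_inter_isBasis (hJB ▸ hJ)
    refine ⟨(M.E \ B₀) ∩ (M.E \ C), (isBase_restrict_iff hCE).2 hbasis, ?_⟩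
    exact Disjoint.mono_right inter_subset_left
      (disjoint_sdiff_right.mono_left ((subset_union_left).trans hsub))

lemma con_indep_iff_of_indep {M : Matroid α} {J I : Set α} (hJ : M.Indep J) :
    (con M J).Indep I ↔ Disjoint I J ∧ M.Indep (I ∪ J) := by
  rw [con_indep_iff M hJ.subset_ground]
  constructor
  · rintro ⟨hIE, J₀, hJ₀, hind⟩
    rw [hJ₀.eq_of_subset_indep hJ hJ₀.subset rfl.subset] at hind
    exact ⟨(subset_diff.mp hIE).2, hind⟩
  · rintro ⟨hdisj, hind⟩
    exact ⟨subset_diff.mpr ⟨(subset_union_left).trans hind.subset_ground, hdisj⟩,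
      J, hJ.isBasis_self, hind⟩

lemma con_con (M : Matroid α) (C D : Set α) : con (con M C) D = con M (C ∪ D) := by
  rw [con, con, con, dual_dual,
    show (M✶ ↾ (M.E \ C))✶.E = M.E \ C from rfl,
    restrict_restrict_eq _ diff_subset, diff_diff]


lemma con_del_indep {M : Matroid α} {G Y I : Set α} (hY : Y ⊆ M.E \ G)
    (hI : (con (del M G) Y).Indep I) : (con M Y).Indep I := by
  have hGE : (del M G).E = M.E \ G := rfl
  rw [con_indep_iff _ (show Y ⊆ (del M G).E from hY)] at hI
  obtain ⟨hIE, J, hJ, hind⟩ := hI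
  rw [del, isBasis_restrict_iff diff_subset] at hJ
  rw [del, restrict_indep_iff] at hind
  rw [con_indep_iff M (hY.trans diff_subset)]
  exact ⟨hIE.trans (diff_subset_diff_left diff_subset), J, hJ.1, hind.1⟩

lemma con_closure_subset {N : Matroid α} {G : Set α} (hG : G ⊆ N.E) (I : Set α) :
    (con N G).closure I ⊆ N.closure (I ∪ G) := by
  obtain ⟨J, hJ⟩ := (con N G).exists_isBasis (I ∩ (con N G).E) inter_subset_right
  have hclJ : (con N G).closure I = (con N G).closure J := by
    rw [hJ.closure_eq_closure, closure_inter_ground]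
  obtain ⟨hJE, K, hK, hJK⟩ := (con_indep_iff N hG).1 hJ.indep
  have hsub : N.closure (J ∪ K) ⊆ N.closure (I ∪ G) :=
    N.closure_subset_closure
      (union_subset_union (hJ.subset.trans inter_subset_left) hK.subset)
  refine hclJ.trans_subset (fun x hx => hsub ?_)
  have hxE : x ∈ (con N G).E := (con N G).closure_subset_ground _ hx
  by_cases hxJK : x ∈ J ∪ K
  · exact N.subset_closure _ (union_subset (hJE.trans diff_subset) hK.indep.subset_ground) hxJK
  by_contra hxcl
  have hxind : N.Indep (insert x (J ∪ K)) := by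
    rw [hJK.insert_indep_iff_of_notMem hxJK]
    exact ⟨(show x ∈ N.E \ G from hxE).1, hxcl⟩
  have hcon : (con N G).Indep (insert x J) := by
    rw [con_indep_iff N hG]
    exact ⟨insert_subset hxE hJE, K, hK, by rwa [insert_union]⟩
  have hxJ : x ∉ J := fun h => hxJK (Or.inl h)
  rw [hJ.indep.mem_closure_iff_of_notMem hxJ] at hx
  exact hx.not_indep hcon

lemma exists_finite_closure_subset {M : Matroid α} [M.Finitary] {X S : Set α}
    (hXfin : X.Finite) (hX : X ⊆ M.closure S) :
    ∃ S₀ ⊆ S, S₀.Finite ∧ X ⊆ M.closure S₀ := by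
  have key : ∀ x ∈ X, ∃ T, T ⊆ S ∧ T.Finite ∧ x ∈ M.closure T := by
    intro x hx
    have hx' := hX hx
    have hxE : x ∈ M.E := M.closure_subset_ground _ hx'
    rw [← closure_inter_ground] at hx'
    obtain ⟨J, hJ⟩ := M.exists_isBasis (S ∩ M.E) inter_subset_right
    rw [← hJ.closure_eq_closure] at hx'
    have hJS : J ⊆ S := hJ.subset.trans inter_subset_left
    by_cases hxJ : x ∈ J
    · exact ⟨{x}, singleton_subset_iff.2 (hJS hxJ), finite_singleton x,
        M.subset_closure {x} (singleton_subset_iff.2 hxE) rfl⟩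
    rw [hJ.indep.mem_closure_iff_of_notMem hxJ] at hx'
    have hnind : ¬ M.Indep (insert x J) := hx'.not_indep
    have : ¬ ∀ F ⊆ insert x J, F.Finite → M.Indep F := by
      intro h
      exact hnind (M.indep_of_forall_finite_subset_indep _ h)
    push_neg at this
    obtain ⟨F, hFsub, hFfin, hFnind⟩ := this
    refine ⟨F \ {x}, ?_, (hFfin.diff (t := {x})), ?_⟩
    · intro y hy
      exact hJS ((hFsub hy.1).resolve_left hy.2)
    have hS₀J : F \ {x} ⊆ J := fun y hy => (hFsub hy.1).resolve_left hy.2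
    have hS₀ind : M.Indep (F \ {x}) := hJ.indep.subset hS₀J
    have hxS₀ : x ∉ F \ {x} := fun h => h.2 rfl
    rw [hS₀ind.mem_closure_iff_of_notMem hxS₀]
    refine ⟨fun hind => hFnind (hind.subset ?_), insert_subset hxE (hS₀J.trans hJ.indep.subset_ground)⟩
    intro y hy
    by_cases hyx : y = x
    · exact mem_insert_iff.2 (Or.inl hyx)
    · exact Or.inr ⟨hy, hyx⟩
  choose! f h1 h2 h3 using key
  refine ⟨⋃ x ∈ X, f x, iUnion₂_subset h1, hXfin.biUnion h2, fun x hx => ?_⟩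
  exact M.closure_subset_closure (subset_biUnion_of_mem hx) (h3 x hx)


/-- If `G` is `(M,N)`-negligible and `G' ⊆ E ∖ G` is `(M−G, N/G)`-negligible, then
`G ∪ G'` is `(M,N)`-negligible. -/
theorem statement3 (M N : Matroid α) [M.Finitary] [N.Finitary] (hE : M.E = N.E)
    (G G' : Set α) (hG : Negligible M N G) (hG'sub : G' ⊆ M.E \ G)
    (hG' : Negligible (del M G) (con N G) G') : Negligible M N (G ∪ G') := by
  obtain ⟨hGE, hGmatch⟩ := hG
  obtain ⟨hG'E, hG'match⟩ := hG'
  refine ⟨union_subset hGE (hG'sub.trans diff_subset), ?_⟩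
  intro X hX hXfin Y hY hYfin
  have hX₂G' : X \ G ⊆ G' := fun x hx => (hX hx.1).resolve_left hx.2
  have hYsub' : Y ⊆ (del M G).E \ G' := by
    intro y hy
    obtain ⟨hyE, hyG⟩ := hY hy
    exact ⟨⟨hyE, fun h => hyG (Or.inl h)⟩, fun h => hyG (Or.inr h)⟩
  obtain ⟨I₂, hI₂ind, hI₂cl⟩ := hG'match (X \ G) hX₂G' (hXfin.diff (t := G)) Y hYsub' hYfin
  have hGN : G ⊆ N.E := hE ▸ hGE
  have hX₂cl : X \ G ⊆ N.closure (I₂ ∪ G) := hI₂cl.trans (con_closure_subset hGN I₂)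
  obtain ⟨S₀, hS₀sub, hS₀fin, hX₂cl'⟩ := exists_finite_closure_subset (hXfin.diff (t := G)) hX₂cl
  set I₂' := S₀ ∩ I₂ with hI₂'def
  set G₀ := S₀ ∩ G with hG₀def
  have hS₀split : S₀ ⊆ I₂' ∪ G₀ := fun x hx =>
    (hS₀sub hx).elim (fun h => Or.inl ⟨hx, h⟩) (fun h => Or.inr ⟨hx, h⟩)
  have hX₂cl'' : X \ G ⊆ N.closure (I₂' ∪ G₀) :=
    hX₂cl'.trans (N.closure_subset_closure hS₀split)
  have hI₂'ind : (con (del M G) Y).Indep I₂' := hI₂ind.subset inter_subset_right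
  have hYG : Y ⊆ M.E \ G := fun y hy => ⟨(hY hy).1, fun h => (hY hy).2 (Or.inl h)⟩
  have hI₂'M : (con M Y).Indep I₂' := con_del_indep hYG hI₂'ind
  have hI₂sub : I₂ ⊆ (M.E \ G) \ Y := hI₂ind.subset_ground
  have hYI₂' : Y ∪ I₂' ⊆ M.E \ G :=
    union_subset hYG (inter_subset_right.trans (hI₂sub.trans diff_subset))
  obtain ⟨I₁, hI₁ind, hI₁cl⟩ := hGmatch (X ∩ G ∪ G₀)
    (union_subset inter_subset_right inter_subset_right)
    ((hXfin.inter_of_left G).union (hS₀fin.inter_of_left G))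
    (Y ∪ I₂') hYI₂' (hYfin.union (hS₀fin.inter_of_left I₂))
  have hfin_ind : (con M Y).Indep (I₁ ∪ I₂') := by
    rw [← con_con] at hI₁ind
    exact ((con_indep_iff_of_indep hI₂'M).1 hI₁ind).2
  refine ⟨I₁ ∪ I₂', hfin_ind, ?_⟩
  have hI₁E : I₁ ⊆ N.E :=
    hE ▸ ((show I₁ ⊆ M.E \ (Y ∪ I₂') from hI₁ind.subset_ground).trans diff_subset)
  have hI₂'E : I₂' ⊆ N.E :=
    hE ▸ (inter_subset_right.trans (hI₂sub.trans (diff_subset.trans diff_subset)))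
  have hsub1 : N.closure I₁ ⊆ N.closure (I₁ ∪ I₂') :=
    N.closure_subset_closure subset_union_left
  have hkey : I₂' ∪ G₀ ⊆ N.closure (I₁ ∪ I₂') :=
    union_subset
      ((subset_union_right).trans (N.subset_closure _ (union_subset hI₁E hI₂'E)))
      (fun y hy => hsub1 (hI₁cl (Or.inr hy)))
  intro x hx
  by_cases hxG : x ∈ G
  · exact hsub1 (hI₁cl (Or.inl ⟨hx, hxG⟩))
  · exact closure_subset_closure_of_subset_closure hkey (hX₂cl'' ⟨hx, hxG⟩)

end AZ
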